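/- Let δ > 0, 0 ≤ b ≤ 1, and β ≥ 0. Let B, H be continuous on (-1,-1+δ] with inf_{x ∈ (-1,-1+δ]} (1+x)^{1-b}·H(x) > -∞ and lim_{x→-1⁺} (1+x)·B(x) = -β. Suppose V ∈ C¹((-1,-1+δ]) satisfies the linear equation V'(x) + B(x)·V(x) = H(x) on (-1,-1+δ). Then for every ε > 0 there exists a constant C > 0 such that V(x) ≤ C·(1+x)^{min{b,β}-ε} for all x ∈ (-1,-1+δ]. -/

import Mathlib

open Set Filter Topology

/-- Upper bound V(x) ≤ C(1+x)^{min(b,β)-ε} for solutions of V' + BV = H, when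
(1+x)^{1-b}H is bounded below and (1+x)B(x) → -β with β ≥ 0. -/
theorem stmt16 (δ b β : ℝ) (hδ : 0 < δ) (hb₀ : 0 ≤ b) (hb₁ : b ≤ 1) (hβ : 0 ≤ β)
    (B H V V' : ℝ → ℝ)
    (hB : ContinuousOn B (Ioc (-1 : ℝ) (-1 + δ)))
    (hH : ContinuousOn H (Ioc (-1 : ℝ) (-1 + δ)))
    (hHinf : ∃ m : ℝ, ∀ x ∈ Ioc (-1 : ℝ) (-1 + δ), m ≤ (1 + x) ^ (1 - b) * H x)
    (hBlim : Tendsto (fun x => (1 + x) * B x) (𝓝[>] (-1)) (𝓝 (-β)))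
    (hV : ∀ x ∈ Ioc (-1 : ℝ) (-1 + δ),
      HasDerivWithinAt V (V' x) (Ioc (-1 : ℝ) (-1 + δ)) x)
    (hV' : ContinuousOn V' (Ioc (-1 : ℝ) (-1 + δ)))
    (heq : ∀ x ∈ Ioo (-1 : ℝ) (-1 + δ), V' x + B x * V x = H x) :
    ∀ ε > (0 : ℝ), ∃ C > (0 : ℝ), ∀ x ∈ Ioc (-1 : ℝ) (-1 + δ),
      V x ≤ C * (1 + x) ^ (min b β - ε) := by
  intro ε hε
  obtain ⟨m, hm⟩ := hHinf
  set γ : ℝ := min b β - ε with hγ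
  set q : ℝ := b - 1 - γ with hq
  have hq1 : 0 < q + 1 := by
    have := min_le_left b β
    simp only [hq, hγ]; linarith
  set M : ℝ := min m 0 - 1 with hM
  have hMneg : M < 0 := by
    have := min_le_right m 0; simp only [hM]; linarith
  have hmM : 1 ≤ m - M := by
    have := min_le_left m 0; simp only [hM]; linarith
  -- choose x₀ close to -1 where (1+x)B(x) + γ < 0
  have hγβ : -β < -γ := by
    have := min_le_right b β; simp only [hγ]; linarith
  have hev : ∀ᶠ x in 𝓝[>] (-1:ℝ), (1 + x) * B x < -γ := hBlim.eventually_lt_const hγβ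
  rw [eventually_iff, mem_nhdsGT_iff_exists_Ioc_subset] at hev
  obtain ⟨u, hu, hsub⟩ := hev
  set x₀ : ℝ := min u (-1 + δ/2) with hx₀def
  have hx₀l : -1 < x₀ := lt_min hu (by linarith)
  have hx₀r : x₀ < -1 + δ := by
    have := min_le_right u (-1 + δ/2); simp only [hx₀def] at *; linarith
  have hBneg : ∀ t ∈ Ioc (-1:ℝ) x₀, (1 + t) * B t + γ < 0 := by
    intro t ht
    have h1 : t ∈ Ioc (-1:ℝ) u := ⟨ht.1, ht.2.trans (min_le_left _ _)⟩
    have h2 := hsub h1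
    simp only [mem_setOf_eq] at h2
    linarith
  -- ψ and its derivative Ψ
  set ψ : ℝ → ℝ := fun t => (1 + t) ^ (-γ) * V t with hψdef
  set Ψ : ℝ → ℝ := fun t => 1 * -γ * (1 + t) ^ (-γ - 1) * V t + (1 + t) ^ (-γ) * V' t
    with hΨdef
  have hψd : ∀ t ∈ Ioc (-1:ℝ) (-1 + δ),
      HasDerivWithinAt ψ (Ψ t) (Ioc (-1:ℝ) (-1 + δ)) t := by
    intro t ht
    have h1t : (0:ℝ) < 1 + t := by linarith [ht.1]
    have hbase : HasDerivWithinAt (fun y : ℝ => 1 + y) 1 (Ioc (-1:ℝ) (-1 + δ)) t :=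
      ((hasDerivAt_id t).const_add 1).hasDerivWithinAt
    exact (hbase.rpow_const (Or.inl h1t.ne')).mul (hV t ht)
  have hψc : ContinuousOn ψ (Ioc (-1:ℝ) (-1 + δ)) :=
    fun t ht => (hψd t ht).continuousWithinAt
  -- the auxiliary function G
  set Gf : ℝ → ℝ := fun t => (M / (q + 1)) * (1 + t) ^ (q + 1) with hGfdef
  have hGd : ∀ t : ℝ, -1 < t → HasDerivAt Gf (M * (1 + t) ^ q) t := by
    intro t ht
    have h1t : (0:ℝ) < 1 + t := by linarith
    have hbase : HasDerivAt (fun y : ℝ => 1 + y) 1 t := (hasDerivAt_id t).const_add 1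
    have h := (hbase.rpow_const (p := q + 1) (Or.inl h1t.ne')).const_mul (M / (q + 1))
    have he : q + 1 - 1 = q := by ring
    rw [he] at h
    convert h using 1
    · rfl
    · rfl
    field_simp
  have hMq : M / (q + 1) ≤ 0 := div_nonpos_iff.mpr (Or.inr ⟨hMneg.le, hq1.le⟩)
  have hGfnonpos : ∀ t : ℝ, -1 < t → Gf t ≤ 0 := by
    intro t ht
    have h0 : (0:ℝ) ≤ (1 + t) ^ (q + 1) := Real.rpow_nonneg (by linarith) _
    exact mul_nonpos_of_nonpos_of_nonneg hMq h0
  have hGfmono : ∀ t : ℝ, -1 < t → t ≤ x₀ → Gf x₀ ≤ Gf t := by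
    intro t ht htx
    have h1 : (1 + t) ^ (q + 1) ≤ (1 + x₀) ^ (q + 1) :=
      Real.rpow_le_rpow (by linarith) (by linarith) hq1.le
    exact mul_le_mul_of_nonpos_left h1 hMq
  -- key derivative inequality where V > 0
  have hkey : ∀ t : ℝ, -1 < t → t < x₀ → 0 < V t →
      (1 + t) ^ q ≤ Ψ t - M * (1 + t) ^ q := by
    intro t ht htx hVt
    have h1t : (0:ℝ) < 1 + t := by linarith
    have hu1 : (0:ℝ) < (1 + t) ^ (-γ - 1) := Real.rpow_pos_of_pos h1t _
    have hVeq : V' t = H t - B t * V t := by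
      have := heq t ⟨ht, by linarith⟩; linarith
    have hrw1 : (1 + t) ^ (-γ) = (1 + t) ^ (-γ - 1) * (1 + t) := by
      rw [← Real.rpow_add_one h1t.ne' (-γ - 1)]
      congr 1; ring
    have hHt : m * (1 + t) ^ (b - 1) ≤ H t := by
      have h2 := hm t ⟨ht, by linarith⟩
      have h3 : (0:ℝ) < (1 + t) ^ (b - 1) := Real.rpow_pos_of_pos h1t _
      have h4 : (1 + t) ^ (b - 1) * (1 + t) ^ (1 - b) = 1 := by
        rw [← Real.rpow_add h1t]
        rw [show (b - 1) + (1 - b) = 0 by ring, Real.rpow_zero]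
      calc m * (1 + t) ^ (b - 1) ≤ ((1 + t) ^ (1 - b) * H t) * (1 + t) ^ (b - 1) :=
            mul_le_mul_of_nonneg_right h2 h3.le
        _ = ((1 + t) ^ (b - 1) * (1 + t) ^ (1 - b)) * H t := by ring
        _ = H t := by rw [h4, one_mul]
    have e1 : Ψ t = (1 + t) ^ (-γ - 1) * ((1 + t) * H t)
        - (1 + t) ^ (-γ - 1) * ((1 + t) * B t + γ) * V t := by
      simp only [hΨdef]
      rw [hVeq, hrw1]; ring
    have h5 : (1 + t) ^ (-γ - 1) * ((1 + t) * (m * (1 + t) ^ (b - 1))) = m * (1 + t) ^ q := by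
      have hone : (1 + t) ^ (1:ℝ) = 1 + t := Real.rpow_one _
      have hmul : ∀ a c : ℝ, (1 + t) ^ a * (1 + t) ^ c = (1 + t) ^ (a + c) :=
        fun a c => (Real.rpow_add h1t a c).symm
      calc (1 + t) ^ (-γ - 1) * ((1 + t) * (m * (1 + t) ^ (b - 1)))
          = m * ((1 + t) ^ (-γ - 1) * ((1 + t) ^ (1:ℝ) * (1 + t) ^ (b - 1))) := by
            rw [hone]; ring
        _ = m * (1 + t) ^ (-γ - 1 + (1 + (b - 1))) := by rw [hmul, hmul]
        _ = m * (1 + t) ^ q := by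
            rw [show -γ - 1 + (1 + (b - 1)) = q by rw [hq]; ring]
    have e2 : m * (1 + t) ^ q ≤ (1 + t) ^ (-γ - 1) * ((1 + t) * H t) := by
      rw [← h5]
      apply mul_le_mul_of_nonneg_left _ hu1.le
      exact mul_le_mul_of_nonneg_left hHt h1t.le
    have hcoef : (1 + t) * B t + γ < 0 := hBneg t ⟨ht, htx.le⟩
    have e3 : (1 + t) ^ (-γ - 1) * ((1 + t) * B t + γ) * V t ≤ 0 := by
      apply mul_nonpos_of_nonpos_of_nonneg _ hVt.le
      exact mul_nonpos_of_nonneg_of_nonpos hu1.le hcoef.le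
    have hsq : (0:ℝ) < (1 + t) ^ q := Real.rpow_pos_of_pos h1t _
    nlinarith [e1, e2, e3, hsq, hmM]
  -- barrier bound on (-1, x₀]
  set K : ℝ := max (ψ x₀ - Gf x₀) (-Gf x₀) with hK
  have hbound : ∀ x ∈ Ioc (-1:ℝ) x₀, ψ x ≤ K := by
    intro x hx
    by_contra hcon
    push_neg at hcon
    have hχx : K < ψ x - Gf x := lt_of_lt_of_le hcon (by linarith [hGfnonpos x hx.1])
    have hIccsub : Icc x x₀ ⊆ Ioc (-1:ℝ) (-1 + δ) := fun y hy =>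
      ⟨lt_of_lt_of_le hx.1 hy.1, le_trans hy.2 hx₀r.le⟩
    have hfc : ContinuousOn (fun t => -(ψ t - Gf t)) (Icc x x₀) := by
      apply ContinuousOn.neg
      apply ContinuousOn.sub (hψc.mono hIccsub)
      intro y hy
      exact (hGd y (lt_of_lt_of_le hx.1 hy.1)).continuousAt.continuousWithinAt
    have hfd : ∀ t ∈ Ico x x₀, HasDerivWithinAt (fun t => -(ψ t - Gf t))
        (-(Ψ t - M * (1 + t) ^ q)) (Ici t) t := by
      intro t ht
      have ht1 : -1 < t := lt_of_lt_of_le hx.1 ht.1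
      have ht2 : t < -1 + δ := lt_trans ht.2 hx₀r
      have hmem : Ioc (-1:ℝ) (-1 + δ) ∈ 𝓝[Ici t] t := by
        apply mem_nhdsWithin_of_mem_nhds
        exact Filter.mem_of_superset (Ioo_mem_nhds ht1 ht2) Ioo_subset_Ioc_self
      have h1 := (hψd t ⟨ht1, ht2.le⟩).mono_of_mem_nhdsWithin hmem
      exact (h1.sub (hGd t ht1).hasDerivWithinAt).neg
    have hbd : ∀ t ∈ Ico x x₀, (fun t => -(ψ t - Gf t)) t = (fun _ : ℝ => -(ψ x - Gf x)) t →
        (-(Ψ t - M * (1 + t) ^ q)) < (fun _ : ℝ => (0:ℝ)) t := by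
      intro t ht hft
      simp only at hft
      have ht1 : -1 < t := lt_of_lt_of_le hx.1 ht.1
      have hGm := hGfmono t ht1 ht.2.le
      have hKge : -Gf x₀ ≤ K := le_max_right _ _
      have hψt : 0 < ψ t := by linarith
      have hVt : 0 < V t := by
        by_contra hVle
        push_neg at hVle
        have : ψ t ≤ 0 := by
          simp only [hψdef]
          exact mul_nonpos_of_nonneg_of_nonpos (Real.rpow_nonneg (by linarith) _) hVle
        linarith
      have h6 := hkey t ht1 ht.2 hVt
      have hsq : (0:ℝ) < (1 + t) ^ q := Real.rpow_pos_of_pos (by linarith) _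
      simp only
      linarith
    have happ := image_le_of_deriv_right_lt_deriv_boundary (a := x) (b := x₀)
      (B := fun _ => -(ψ x - Gf x)) (B' := fun _ => 0)
      hfc hfd (le_refl _) (fun y => hasDerivAt_const y _) hbd
    have hfin := happ (x := x₀) ⟨hx.2, le_refl x₀⟩
    have hKge : ψ x₀ - Gf x₀ ≤ K := le_max_left _ _
    linarith
  -- compact part
  have hsub2 : Icc x₀ (-1 + δ) ⊆ Ioc (-1:ℝ) (-1 + δ) := fun y hy =>
    ⟨lt_of_lt_of_le hx₀l hy.1, hy.2⟩
  obtain ⟨z, hz, hzmax⟩ := (isCompact_Icc (a := x₀) (b := -1 + δ)).exists_isMaxOn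
    ⟨x₀, le_refl _, hx₀r.le⟩ (hψc.mono hsub2)
  set C : ℝ := max (max K (ψ z)) 1 with hC
  refine ⟨C, lt_of_lt_of_le one_pos (le_max_right _ _), ?_⟩
  intro x hx
  have h1x : (0:ℝ) < 1 + x := by linarith [hx.1]
  have hψx : ψ x ≤ C := by
    rcases le_or_gt x x₀ with h | h
    · exact le_trans (hbound x ⟨hx.1, h⟩) (le_trans (le_max_left _ _) (le_max_left _ _))
    · exact le_trans (hzmax ⟨h.le, hx.2⟩) (le_trans (le_max_right _ _) (le_max_left _ _))
  have hcanc : (1 + x) ^ (-γ) * (1 + x) ^ γ = 1 := by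
    rw [← Real.rpow_add h1x, show -γ + γ = 0 by ring, Real.rpow_zero]
  have hVx : V x = ψ x * (1 + x) ^ γ := by
    simp only [hψdef]
    linear_combination (-(V x)) * hcanc
  rw [hVx]
  exact mul_le_mul_of_nonneg_right hψx (Real.rpow_nonneg h1x.le _)
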